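/- In two-color FLAG COLORING, a properly two-colored complete bipartite graph K_{m,n} (with m, n ≥ 1, each part monochromatic in one of the two colors) is a P-position if and only if m ≥ 2 and n ≥ 2. -/

import Mathlib

/-- The minimum excludant of a set of naturals. -/
noncomputable def mexN (S : Set ℕ) : ℕ := sInf {n | n ∉ S}

namespace FlagColoring

variable {V : Type} {C : Type}

/-- The subgraph of `G` induced by the color class `c` of the coloring `f`
(as a graph on the same vertex set). -/
def colorSub (G : SimpleGraph V) (f : V → C) (c : C) : SimpleGraph V where
  Adj u w := G.Adj u w ∧ f u = c ∧ f w = c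
  symm := ⟨fun _ _ h => ⟨h.1.symm, h.2.2, h.2.1⟩⟩
  loopless := ⟨fun u h => G.irrefl h.1⟩

open Classical in
/-- One move of FLAG COLORING on the graph `G`: choose a vertex `v` and a color `c'`
different from the color `f v` of `v` and appearing on some neighbor of `v`, and recolor
the whole connected monochromatic component of `v` (its component in the subgraph induced
by the vertices of color `f v`) with `c'`. -/
def Move (G : SimpleGraph V) (f g : V → C) : Prop :=
  ∃ v c', c' ≠ f v ∧ (∃ u, G.Adj v u ∧ f u = c') ∧
    g = fun w => if (colorSub G f (f v)).Reachable v w then c' else f w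

open Classical in
/-- The number of ordered pairs of adjacent, differently colored vertices.
Every move strictly decreases this quantity, so it bounds the length of play. -/
noncomputable def boundary [Fintype V] (G : SimpleGraph V) (f : V → C) : ℕ :=
  (Finset.univ.filter (fun p : V × V => G.Adj p.1 p.2 ∧ f p.1 ≠ f p.2)).card

/-- Grundy value computation with fuel. -/
noncomputable def grundyAux (G : SimpleGraph V) : ℕ → (V → C) → ℕ
  | 0, _ => 0
  | (n+1), f => mexN {k | ∃ g, Move G f g ∧ grundyAux G n g = k}

/-- The Grundy value (nimber) of the FLAG COLORING position `(G, f)`. Since every move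
strictly decreases `boundary`, fuel `boundary G f + 1` suffices to compute the true
Grundy value: the mex of the Grundy values of the options (`0` if there are no options).
A position is a P-position exactly when its Grundy value is `0`. -/
noncomputable def grundy [Fintype V] (G : SimpleGraph V) (f : V → C) : ℕ :=
  grundyAux G (boundary G f + 1) f

end FlagColoring

/-- The complete bipartite graph `K_{m,n}` on `Fin m ⊕ Fin n`. -/
def KGraph (m n : ℕ) : SimpleGraph (Fin m ⊕ Fin n) :=
  SimpleGraph.fromRel (fun u v => u.isLeft ∧ v.isRight)

/-- The proper 2-coloring of `K_{m,n}`: each part is monochromatic. -/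
def KColor (m n : ℕ) : Fin m ⊕ Fin n → Bool := fun v => v.isLeft

namespace FlagColoring
variable {V : Type} {C : Type}

lemma reach_ind {G : SimpleGraph V} {P : V → Prop}
    (h : ∀ x y, P x → G.Adj x y → P y) :
    ∀ {x w : V}, G.Reachable x w → P x → P w := by
  intro x w hw hx
  obtain ⟨p⟩ := hw
  induction p with
  | nil => exact hx
  | cons had q ih => exact ih (h _ _ hx had)

lemma reach_color {G : SimpleGraph V} {f : V → C} {c : C} {v w : V}
    (h : (colorSub G f c).Reachable v w) (hv : f v = c) : f w = c :=
  reach_ind (G := colorSub G f c) (P := fun w => f w = c) (fun _ _ _ hadj => hadj.2.2) h hv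

lemma boundary_lt [Fintype V] {G : SimpleGraph V} {f g : V → C} (h : Move G f g) :
    boundary G g < boundary G f := by
  classical
  obtain ⟨v, c', hc', ⟨u, hadj, hu⟩, rfl⟩ := h
  have hRcol : ∀ w, (colorSub G f (f v)).Reachable v w → f w = f v :=
    fun w hw => reach_color hw rfl
  apply Finset.card_lt_card
  rw [Finset.ssubset_iff_of_subset]
  · refine ⟨(v, u), ?_, ?_⟩
    · simp only [Finset.mem_filter, Finset.mem_univ, true_and]
      exact ⟨hadj, fun he => hc' (he ▸ hu.symm ▸ rfl)⟩
    · simp only [Finset.mem_filter, Finset.mem_univ, true_and, not_and, not_not]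
      intro _
      have hRv : (colorSub G f (f v)).Reachable v v := SimpleGraph.Reachable.refl v
      have hRu : ¬ (colorSub G f (f v)).Reachable v u := fun hr => hc' (hu ▸ hRcol u hr)
      simp [hRv, hRu, hu]
  · intro p hp
    simp only [Finset.mem_filter, Finset.mem_univ, true_and] at hp ⊢
    refine ⟨hp.1, ?_⟩
    by_cases h1 : (colorSub G f (f v)).Reachable v p.1 <;>
      by_cases h2 : (colorSub G f (f v)).Reachable v p.2
    · exfalso; apply hp.2; simp [h1, h2]
    · intro he
      exact h2 (h1.trans (SimpleGraph.Adj.reachable ⟨hp.1, hRcol _ h1, he ▸ hRcol _ h1⟩))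
    · intro he
      exact h1 (h2.trans (SimpleGraph.Adj.reachable ⟨hp.1.symm, hRcol _ h2, he ▸ hRcol _ h2⟩))
    · simpa [h1, h2] using hp.2

lemma grundyAux_stable [Fintype V] {G : SimpleGraph V} :
    ∀ B : ℕ, ∀ f : V → C, boundary G f ≤ B → ∀ N, boundary G f < N →
      grundyAux G N f = grundyAux G (boundary G f + 1) f := by
  intro B
  induction B with
  | zero =>
    intro f hf N hN
    obtain ⟨N', rfl⟩ : ∃ N', N = N' + 1 := ⟨N - 1, by omega⟩
    have hnomove : ∀ g : V → C, ¬ Move G f g := by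
      intro g hg
      have := boundary_lt hg
      omega
    simp only [grundyAux]
    congr 1
    ext k
    constructor <;> rintro ⟨g, hg, _⟩ <;> exact absurd hg (hnomove g)
  | succ B ih =>
    intro f hf N hN
    obtain ⟨N', rfl⟩ : ∃ N', N = N' + 1 := ⟨N - 1, by omega⟩
    simp only [grundyAux]
    congr 1
    ext k
    have key : ∀ g, Move G f g → grundyAux G N' g = grundyAux G (boundary G f) g := by
      intro g hg
      have hb := boundary_lt hg
      rw [ih g (by omega) N' (by omega), ih g (by omega) (boundary G f) (by omega)]
    constructor <;> rintro ⟨g, hg, rfl⟩ <;> exact ⟨g, hg, by rw [key g hg]⟩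

lemma grundy_eq_mex [Fintype V] {G : SimpleGraph V} (f : V → C) :
    grundy G f = mexN {k | ∃ g, Move G f g ∧ grundy G g = k} := by
  rw [grundy]
  simp only [grundyAux]
  congr 1
  ext k
  constructor <;> rintro ⟨g, hg, rfl⟩ <;>
    exact ⟨g, hg, by rw [grundy, grundyAux_stable (boundary G f) g (by have := boundary_lt hg; omega) _ (boundary_lt hg)]⟩

end FlagColoring

lemma kadj {m n : ℕ} (u w : Fin m ⊕ Fin n) :
    (KGraph m n).Adj u w ↔ u.isLeft ≠ w.isLeft := by
  rcases u with i | i <;> rcases w with j | j <;>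
    simp [KGraph, SimpleGraph.fromRel_adj]

open FlagColoring in
lemma reach_iff {m n : ℕ} (f : Fin m ⊕ Fin n → Bool) (v w : Fin m ⊕ Fin n) :
    (colorSub (KGraph m n) f (f v)).Reachable v w ↔
      (w = v ∨ (f w = f v ∧ (w.isLeft ≠ v.isLeft ∨
        ∃ u, u.isLeft ≠ v.isLeft ∧ f u = f v))) := by
  constructor
  · intro h
    refine reach_ind (G := colorSub (KGraph m n) f (f v))
      (P := fun w => w = v ∨ (f w = f v ∧ (w.isLeft ≠ v.isLeft ∨
        ∃ u, u.isLeft ≠ v.isLeft ∧ f u = f v))) ?_ h (Or.inl rfl)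
    rintro x y hx ⟨hadj, hfx, hfy⟩
    rw [kadj] at hadj
    refine Or.inr ⟨hfy, ?_⟩
    by_cases hy : y.isLeft = v.isLeft
    · refine Or.inr ⟨x, ?_, hfx⟩
      rw [hy] at hadj
      exact hadj
    · exact Or.inl hy
  · intro h
    have adj2 : ∀ x y : Fin m ⊕ Fin n, (KGraph m n).Adj x y → f x = f v → f y = f v →
        (colorSub (KGraph m n) f (f v)).Adj x y := fun x y h a b => ⟨h, a, b⟩
    rcases h with heq | ⟨hfw, hside | ⟨u, hu, hfu⟩⟩
    · rw [heq]
    · exact SimpleGraph.Adj.reachable (adj2 v w ((kadj v w).mpr (Ne.symm hside)) rfl hfw)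
    · by_cases hvw : w = v
      · rw [hvw]
      · by_cases hws : w.isLeft = v.isLeft
        · exact (SimpleGraph.Adj.reachable (adj2 v u ((kadj v u).mpr (Ne.symm hu)) rfl hfu)).trans
            (SimpleGraph.Adj.reachable (adj2 u w ((kadj u w).mpr (by rw [hws]; exact hu)) hfu hfw))
        · exact SimpleGraph.Adj.reachable (adj2 v w ((kadj v w).mpr (Ne.symm hws)) rfl hfw)

open FlagColoring Finset

section States
variable {m n : ℕ}

def fL (m n : ℕ) (s : Finset (Fin m)) : Fin m ⊕ Fin n → Bool :=
  fun v => match v with | .inl i => decide (i ∈ s) | .inr _ => false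

def fR (m n : ℕ) (t : Finset (Fin n)) : Fin m ⊕ Fin n → Bool :=
  fun v => match v with | .inl _ => true | .inr j => decide (j ∈ t)

@[simp] lemma fL_inl (s : Finset (Fin m)) (i : Fin m) : fL m n s (.inl i) = decide (i ∈ s) := rfl
@[simp] lemma fL_inr (s : Finset (Fin m)) (j : Fin n) : fL m n s (.inr j) = false := rfl
@[simp] lemma fR_inl (t : Finset (Fin n)) (i : Fin m) : fR m n t (.inl i) = true := rfl
@[simp] lemma fR_inr (t : Finset (Fin n)) (j : Fin n) : fR m n t (.inr j) = decide (j ∈ t) := rfl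

open Classical in
lemma g_form (f : Fin m ⊕ Fin n → Bool) (v : Fin m ⊕ Fin n) (c' : Bool) :
    (fun w => if (colorSub (KGraph m n) f (f v)).Reachable v w then c' else f w)
      = fun w => if w = v ∨ (f w = f v ∧ (w.isLeft ≠ v.isLeft ∨
          ∃ u, u.isLeft ≠ v.isLeft ∧ f u = f v)) then c' else f w := by
  funext w
  exact if_congr (reach_iff f v w) rfl rfl

lemma bool_ne {a b : Bool} (h : a ≠ b) : a = !b := by
  cases a <;> cases b <;> simp_all
end States

section MoveChar
variable {m n : ℕ}

lemma keyR1 (t : Finset (Fin n)) (ht : t.Nonempty) (i : Fin m)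
    {D : ∀ w, Decidable ((colorSub (KGraph m n) (fR m n t) ((fR m n t) (Sum.inl i))).Reachable
      (Sum.inl i) w)} :
    (fun w => @ite _ _ (D w) false (fR m n t w)) = fL m n ∅ := by
  obtain ⟨j0, hj0⟩ := ht
  funext w
  rw [if_congr (reach_iff (fR m n t) (Sum.inl i) w) rfl rfl]
  rcases w with i' | j'
  · by_cases h : i' = i
    · simp [h]
    · have : (∃ u : Fin m ⊕ Fin n, u.isLeft ≠ (Sum.inl i : Fin m ⊕ Fin n).isLeft ∧
          fR m n t u = fR m n t (Sum.inl i)) := ⟨Sum.inr j0, by simp, by simp [hj0]⟩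
      simp [h]
      exact ⟨j0, hj0⟩
  · by_cases h : j' ∈ t <;> simp [h]

lemma keyR2 (t : Finset (Fin n)) {j : Fin n} (hj : j ∉ t)
    {D : ∀ w, Decidable ((colorSub (KGraph m n) (fR m n t) ((fR m n t) (Sum.inr j))).Reachable
      (Sum.inr j) w)} :
    (fun w => @ite _ _ (D w) true (fR m n t w)) = fR m n (insert j t) := by
  funext w
  rw [if_congr (reach_iff (fR m n t) (Sum.inr j) w) rfl rfl]
  rcases w with i' | j'
  · simp [hj]
  · by_cases h : j' = j
    · simp [h, hj]
    · have hno : ¬ (∃ u : Fin m ⊕ Fin n, u.isLeft ≠ (Sum.inr j : Fin m ⊕ Fin n).isLeft ∧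
          fR m n t u = fR m n t (Sum.inr j)) := by
        rintro ⟨u, hu1, hu2⟩
        rcases u with i'' | j''
        · simp [hj] at hu2
        · simp at hu1
      by_cases h2 : j' ∈ t <;> simp [h, h2, hj, hno, Finset.mem_insert]

lemma moveR (hm : 1 ≤ m) (t : Finset (Fin n)) (ht : t.Nonempty)
    (g : Fin m ⊕ Fin n → Bool) :
    Move (KGraph m n) (fR m n t) g ↔
      (t ≠ Finset.univ ∧ g = fL m n ∅) ∨ (∃ j ∉ t, g = fR m n (insert j t)) := by
  constructor
  · rintro ⟨v, c', hc', ⟨u, hadj, hu⟩, rfl⟩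
    rw [kadj] at hadj
    rcases v with i | j
    · -- left vertex, colored true, c' = false
      have hc : c' = false := by
        have := bool_ne hc'; simpa using this
      subst hc
      obtain ⟨j', rfl⟩ : ∃ j', u = Sum.inr j' := by
        rcases u with i' | j'
        · simp at hadj
        · exact ⟨j', rfl⟩
      have hj' : j' ∉ t := by simpa using hu
      refine Or.inl ⟨fun hEq => hj' (hEq ▸ Finset.mem_univ j'), keyR1 t ht i⟩
    · by_cases hj : j ∈ t
      · -- right true vertex: no valid neighbor
        exfalso
        have hc : c' = false := by
          have := bool_ne hc'; simpa [hj] using this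
        obtain ⟨i', rfl⟩ : ∃ i', u = Sum.inl i' := by
          rcases u with i' | j''
          · exact ⟨i', rfl⟩
          · simp at hadj
        simp [hc] at hu
      · -- right false vertex: recolor it alone
        have hc : c' = true := by
          have := bool_ne hc'; simpa [hj] using this
        subst hc
        exact Or.inr ⟨j, hj, keyR2 t hj⟩
  · rintro (⟨htu, rfl⟩ | ⟨j, hj, rfl⟩)
    · obtain ⟨j', hj'⟩ : ∃ j', j' ∉ t := by
        by_contra h
        push_neg at h
        exact htu (Finset.eq_univ_iff_forall.mpr h)
      refine ⟨Sum.inl ⟨0, hm⟩, false, by simp, ⟨Sum.inr j', by simp [kadj], by simp [hj']⟩,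
        (keyR1 t ht _).symm⟩
    · refine ⟨Sum.inr j, true, by simp [hj], ⟨Sum.inl ⟨0, hm⟩, by simp [kadj], by simp⟩,
        (keyR2 t hj).symm⟩

lemma keyL1 (s : Finset (Fin m)) {i : Fin m} (hi : i ∈ s)
    {D : ∀ w, Decidable ((colorSub (KGraph m n) (fL m n s) ((fL m n s) (Sum.inl i))).Reachable
      (Sum.inl i) w)} :
    (fun w => @ite _ _ (D w) false (fL m n s w)) = fL m n (s.erase i) := by
  funext w
  rw [if_congr (reach_iff (fL m n s) (Sum.inl i) w) rfl rfl]
  have hno : ¬ (∃ u : Fin m ⊕ Fin n, u.isLeft ≠ (Sum.inl i : Fin m ⊕ Fin n).isLeft ∧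
      fL m n s u = fL m n s (Sum.inl i)) := by
    rintro ⟨u, hu1, hu2⟩
    rcases u with i'' | j''
    · simp at hu1
    · simp [hi] at hu2
  rcases w with i' | j'
  · by_cases h : i' = i
    · simp [h, hi]
    · by_cases h2 : i' ∈ s <;> simp [h, h2, hi, hno, Finset.mem_erase]
  · simp [hi, hno]

lemma keyL2 (s : Finset (Fin m)) {i0 : Fin m} (hi0 : i0 ∉ s) (j : Fin n)
    {D : ∀ w, Decidable ((colorSub (KGraph m n) (fL m n s) ((fL m n s) (Sum.inr j))).Reachable
      (Sum.inr j) w)} :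
    (fun w => @ite _ _ (D w) true (fL m n s w)) = fR m n Finset.univ := by
  funext w
  rw [if_congr (reach_iff (fL m n s) (Sum.inr j) w) rfl rfl]
  have hw : (∃ u : Fin m ⊕ Fin n, u.isLeft ≠ (Sum.inr j : Fin m ⊕ Fin n).isLeft ∧
      fL m n s u = fL m n s (Sum.inr j)) := ⟨Sum.inl i0, by simp, by simp [hi0]⟩
  rcases w with i' | j'
  · by_cases h2 : i' ∈ s <;> simp [h2, hw]
  · simp [hw]
    exact Or.inr ⟨i0, hi0⟩

lemma keyS2 (j : Fin n)
    {D : ∀ w, Decidable ((colorSub (KGraph m n) (fL m n Finset.univ)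
      ((fL m n Finset.univ) (Sum.inr j))).Reachable (Sum.inr j) w)} :
    (fun w => @ite _ _ (D w) true (fL m n Finset.univ w)) = fR m n {j} := by
  funext w
  rw [if_congr (reach_iff (fL m n Finset.univ) (Sum.inr j) w) rfl rfl]
  have hno : ¬ (∃ u : Fin m ⊕ Fin n, u.isLeft ≠ (Sum.inr j : Fin m ⊕ Fin n).isLeft ∧
      fL m n Finset.univ u = fL m n Finset.univ (Sum.inr j)) := by
    rintro ⟨u, hu1, hu2⟩
    rcases u with i'' | j''
    · simp at hu2
    · simp at hu1
  rcases w with i' | j'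
  · simp [hno]
  · by_cases h : j' = j <;> simp [h, hno]

lemma moveL (hn : 1 ≤ n) (s : Finset (Fin m)) (hs : s ≠ Finset.univ)
    (g : Fin m ⊕ Fin n → Bool) :
    Move (KGraph m n) (fL m n s) g ↔
      (∃ i ∈ s, g = fL m n (s.erase i)) ∨ (s.Nonempty ∧ g = fR m n Finset.univ) := by
  obtain ⟨i0, hi0⟩ : ∃ i0, i0 ∉ s := by
    by_contra h
    push_neg at h
    exact hs (Finset.eq_univ_iff_forall.mpr h)
  constructor
  · rintro ⟨v, c', hc', ⟨u, hadj, hu⟩, rfl⟩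
    rw [kadj] at hadj
    rcases v with i | j
    · by_cases hi : i ∈ s
      · have hc : c' = false := by
          have := bool_ne hc'; simpa [hi] using this
        subst hc
        exact Or.inl ⟨i, hi, keyL1 s hi⟩
      · exfalso
        have hc : c' = true := by
          have := bool_ne hc'; simpa [hi] using this
        obtain ⟨j', rfl⟩ : ∃ j', u = Sum.inr j' := by
          rcases u with i' | j'
          · simp at hadj
          · exact ⟨j', rfl⟩
        simp [hc] at hu
    · have hc : c' = true := by
        have := bool_ne hc'; simpa using this
      subst hc
      obtain ⟨i', rfl⟩ : ∃ i', u = Sum.inl i' := by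
        rcases u with i' | j''
        · exact ⟨i', rfl⟩
        · simp at hadj
      have hi' : i' ∈ s := by simpa using hu
      exact Or.inr ⟨⟨i', hi'⟩, keyL2 s hi0 j⟩
  · rintro (⟨i, hi, rfl⟩ | ⟨⟨i1, hi1⟩, rfl⟩)
    · exact ⟨Sum.inl i, false, by simp [hi], ⟨Sum.inr ⟨0, hn⟩, by simp [kadj], by simp⟩,
        (keyL1 s hi).symm⟩
    · exact ⟨Sum.inr ⟨0, hn⟩, true, by simp, ⟨Sum.inl i1, by simp [kadj], by simp [hi1]⟩,
        (keyL2 s hi0 ⟨0, hn⟩).symm⟩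

lemma moveStart (hm : 1 ≤ m) (hn : 1 ≤ n) (g : Fin m ⊕ Fin n → Bool) :
    Move (KGraph m n) (fL m n Finset.univ) g ↔
      (∃ i : Fin m, g = fL m n (Finset.univ.erase i)) ∨ (∃ j : Fin n, g = fR m n {j}) := by
  constructor
  · rintro ⟨v, c', hc', ⟨u, hadj, hu⟩, rfl⟩
    rw [kadj] at hadj
    rcases v with i | j
    · have hc : c' = false := by
        have := bool_ne hc'; simpa using this
      subst hc
      exact Or.inl ⟨i, keyL1 Finset.univ (Finset.mem_univ i)⟩
    · have hc : c' = true := by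
        have := bool_ne hc'; simpa using this
      subst hc
      exact Or.inr ⟨j, keyS2 j⟩
  · rintro (⟨i, rfl⟩ | ⟨j, rfl⟩)
    · exact ⟨Sum.inl i, false, by simp, ⟨Sum.inr ⟨0, hn⟩, by simp [kadj], by simp⟩,
        (keyL1 Finset.univ (Finset.mem_univ i)).symm⟩
    · exact ⟨Sum.inr j, true, by simp, ⟨Sum.inl ⟨0, hm⟩, by simp [kadj], by simp⟩,
        (keyS2 j).symm⟩

end MoveChar

/-- The Grundy-value pattern 0,1,2,1,2,1,2,... -/
def hN : ℕ → ℕ := fun k => if k = 0 then 0 else if k % 2 = 1 then 1 else 2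

lemma sInf_eq_of {S : Set ℕ} {k : ℕ} (hk : k ∈ S) (hlt : ∀ j < k, j ∉ S) : sInf S = k := by
  refine le_antisymm (Nat.sInf_le hk) ?_
  by_contra h
  push_neg at h
  exact hlt _ h (Nat.sInf_mem ⟨k, hk⟩)

lemma mexN_eq_of {S : Set ℕ} {k : ℕ} (hk : k ∉ S) (hlt : ∀ j < k, j ∈ S) : mexN S = k :=
  sInf_eq_of hk (by simpa using hlt)

lemma mexN_empty : mexN (∅ : Set ℕ) = 0 := mexN_eq_of (by simp) (by simp)

lemma hN_le (k : ℕ) : hN k ≤ 2 := by unfold hN; split <;> [omega; split <;> omega]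

lemma hN_eq_zero (k : ℕ) : hN k = 0 ↔ k = 0 := by unfold hN; split <;> [simp_all; split <;> omega]

lemma mex_pair (k : ℕ) : mexN ({hN k, 0} : Set ℕ) = hN (k + 1) := by
  by_cases h0 : k = 0
  · subst h0
    have : hN 0 = 0 := rfl
    rw [this, show hN 1 = 1 from rfl]
    exact mexN_eq_of (by simp) (by intro j hj; interval_cases j <;> simp)
  · by_cases h1 : k % 2 = 1
    · have : hN k = 1 := by unfold hN; simp [h0, h1]
      rw [this, show hN (k + 1) = 2 by unfold hN; split <;> [omega; (split <;> omega)]]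
      exact mexN_eq_of (by simp) (by intro j hj; interval_cases j <;> simp)
    · have : hN k = 2 := by unfold hN; simp [h0, h1]
      rw [this, show hN (k + 1) = 1 by unfold hN; split <;> [omega; (split <;> omega)]]
      exact mexN_eq_of (by simp) (by intro j hj; interval_cases j <;> simp)

section Values
variable {m n : ℕ}

lemma grundy_fL_empty (hm : 1 ≤ m) (hn : 1 ≤ n) :
    grundy (KGraph m n) (fL m n ∅) = 0 := by
  have hne : (∅ : Finset (Fin m)) ≠ Finset.univ := by
    have : (⟨0, hm⟩ : Fin m) ∈ (Finset.univ : Finset (Fin m)) := Finset.mem_univ _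
    intro h
    rw [← h] at this
    simp at this
  rw [grundy_eq_mex]
  have : {k | ∃ g, Move (KGraph m n) (fL m n ∅) g ∧ grundy (KGraph m n) g = k} = (∅ : Set ℕ) := by
    apply Set.eq_empty_iff_forall_notMem.mpr
    rintro k ⟨g, hg, -⟩
    rw [moveL hn ∅ hne] at hg
    rcases hg with ⟨i, hi, -⟩ | ⟨⟨i, hi⟩, -⟩ <;> simp at hi
  rw [this, mexN_empty]

lemma grundy_fR (hm : 1 ≤ m) (hn : 1 ≤ n) :
    ∀ k (t : Finset (Fin n)), t.Nonempty → n - t.card = k →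
      grundy (KGraph m n) (fR m n t) = hN k := by
  intro k
  induction k using Nat.strong_induction_on with
  | _ k ih =>
    intro t ht hk
    rw [grundy_eq_mex]
    by_cases htu : t = Finset.univ
    · have hk0 : k = 0 := by
        subst htu
        simp [Finset.card_univ] at hk
        omega
      have : {k' | ∃ g, Move (KGraph m n) (fR m n t) g ∧ grundy (KGraph m n) g = k'}
          = (∅ : Set ℕ) := by
        apply Set.eq_empty_iff_forall_notMem.mpr
        rintro k' ⟨g, hg, -⟩
        rw [moveR hm t ht] at hg
        rcases hg with ⟨h1, -⟩ | ⟨j, hj, -⟩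
        · exact h1 htu
        · exact hj (htu ▸ Finset.mem_univ j)
      rw [this, mexN_empty, hk0]
      rfl
    · have hcard : t.card < n := by
        have := Finset.card_lt_card (Finset.ssubset_univ_iff.mpr htu)
        simpa [Finset.card_univ] using this
      have hk1 : 1 ≤ k := by omega
      have hset : {k' | ∃ g, Move (KGraph m n) (fR m n t) g ∧ grundy (KGraph m n) g = k'}
          = ({hN (k - 1), 0} : Set ℕ) := by
        ext k'
        simp only [Set.mem_setOf_eq, Set.mem_insert_iff, Set.mem_singleton_iff]
        constructor
        · rintro ⟨g, hg, rfl⟩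
          rw [moveR hm t ht] at hg
          rcases hg with ⟨-, rfl⟩ | ⟨j, hj, rfl⟩
          · exact Or.inr (grundy_fL_empty hm hn)
          · refine Or.inl (ih (k - 1) (by omega) _ ⟨j, Finset.mem_insert_self j t⟩ ?_)
            rw [Finset.card_insert_of_notMem hj]
            omega
        · obtain ⟨j', hj'⟩ : ∃ j', j' ∉ t := by
            by_contra h
            push_neg at h
            exact htu (Finset.eq_univ_iff_forall.mpr h)
          rintro (rfl | rfl)
          · refine ⟨fR m n (insert j' t), (moveR hm t ht _).mpr (Or.inr ⟨j', hj', rfl⟩), ?_⟩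
            refine ih (k - 1) (by omega) _ ⟨j', Finset.mem_insert_self j' t⟩ ?_
            rw [Finset.card_insert_of_notMem hj']
            omega
          · exact ⟨fL m n ∅, (moveR hm t ht _).mpr (Or.inl ⟨htu, rfl⟩),
              grundy_fL_empty hm hn⟩
      rw [hset]
      have := mex_pair (k - 1)
      rw [show k - 1 + 1 = k by omega] at this
      exact this

lemma grundy_fL (hm : 1 ≤ m) (hn : 1 ≤ n) :
    ∀ k (s : Finset (Fin m)), s ≠ Finset.univ → s.card = k →
      grundy (KGraph m n) (fL m n s) = hN k := by
  intro k
  induction k using Nat.strong_induction_on with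
  | _ k ih =>
    intro s hs hk
    by_cases hse : s = ∅
    · subst hse
      simp at hk
      rw [grundy_fL_empty hm hn, ← hk]
      rfl
    · have hsne : s.Nonempty := Finset.nonempty_iff_ne_empty.mpr hse
      have hk1 : 1 ≤ k := by
        rw [← hk]
        exact Finset.card_pos.mpr hsne
      have huniv : (Finset.univ : Finset (Fin n)).Nonempty := ⟨⟨0, hn⟩, Finset.mem_univ _⟩
      have hfRu : grundy (KGraph m n) (fR m n Finset.univ) = 0 := by
        have := grundy_fR hm hn 0 Finset.univ huniv (by simp [Finset.card_univ])
        simpa [hN] using this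
      rw [grundy_eq_mex]
      have hset : {k' | ∃ g, Move (KGraph m n) (fL m n s) g ∧ grundy (KGraph m n) g = k'}
          = ({hN (k - 1), 0} : Set ℕ) := by
        ext k'
        simp only [Set.mem_setOf_eq, Set.mem_insert_iff, Set.mem_singleton_iff]
        constructor
        · rintro ⟨g, hg, rfl⟩
          rw [moveL hn s hs] at hg
          rcases hg with ⟨i, hi, rfl⟩ | ⟨-, rfl⟩
          · refine Or.inl (ih (k - 1) (by omega) _ ?_ ?_)
            · intro h
              have : i ∈ s.erase i := by rw [h]; exact Finset.mem_univ i
              simp at this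
            · rw [Finset.card_erase_of_mem hi]
              omega
          · exact Or.inr hfRu
        · obtain ⟨i0, hi0⟩ := Finset.nonempty_iff_ne_empty.mpr hse
          rintro (rfl | rfl)
          · refine ⟨fL m n (s.erase i0), (moveL hn s hs _).mpr (Or.inl ⟨i0, hi0, rfl⟩), ?_⟩
            refine ih (k - 1) (by omega) _ ?_ ?_
            · intro h
              have : i0 ∈ s.erase i0 := by rw [h]; exact Finset.mem_univ i0
              simp at this
            · rw [Finset.card_erase_of_mem hi0]
              omega
          · exact ⟨fR m n Finset.univ, (moveL hn s hs _).mpr (Or.inr ⟨hsne, rfl⟩), hfRu⟩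
      rw [hset]
      have := mex_pair (k - 1)
      rw [show k - 1 + 1 = k by omega] at this
      exact this

lemma grundy_start (hm : 1 ≤ m) (hn : 1 ≤ n) :
    grundy (KGraph m n) (fL m n Finset.univ) = mexN ({hN (m - 1), hN (n - 1)} : Set ℕ) := by
  rw [grundy_eq_mex]
  congr 1
  ext k'
  simp only [Set.mem_setOf_eq, Set.mem_insert_iff, Set.mem_singleton_iff]
  constructor
  · rintro ⟨g, hg, rfl⟩
    rw [moveStart hm hn] at hg
    rcases hg with ⟨i, rfl⟩ | ⟨j, rfl⟩
    · refine Or.inl (grundy_fL hm hn (m - 1) _ ?_ ?_)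
      · intro h
        have : i ∈ Finset.univ.erase i := by rw [h]; exact Finset.mem_univ i
        simp at this
      · rw [Finset.card_erase_of_mem (Finset.mem_univ i)]
        simp [Finset.card_univ]
    · refine Or.inr (grundy_fR hm hn (n - 1) _ ⟨j, Finset.mem_singleton_self j⟩ ?_)
      simp
  · rintro (rfl | rfl)
    · refine ⟨fL m n (Finset.univ.erase ⟨0, hm⟩),
        (moveStart hm hn _).mpr (Or.inl ⟨⟨0, hm⟩, rfl⟩), ?_⟩
      refine grundy_fL hm hn (m - 1) _ ?_ ?_
      · intro h
        have : (⟨0, hm⟩ : Fin m) ∈ Finset.univ.erase ⟨0, hm⟩ := by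
          rw [h]; exact Finset.mem_univ _
        simp at this
      · rw [Finset.card_erase_of_mem (Finset.mem_univ _)]
        simp [Finset.card_univ]
    · refine ⟨fR m n {⟨0, hn⟩}, (moveStart hm hn _).mpr (Or.inr ⟨⟨0, hn⟩, rfl⟩), ?_⟩
      refine grundy_fR hm hn (n - 1) _ ⟨⟨0, hn⟩, Finset.mem_singleton_self _⟩ ?_
      simp

end Values


/-- In two-color FLAG COLORING, a properly two-colored complete bipartite graph
`K_{m,n}` (`m, n ≥ 1`) is a P-position (Grundy value 0) iff `m ≥ 2` and `n ≥ 2`. -/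
theorem completeBipartite_P (m n : ℕ) (hm : 1 ≤ m) (hn : 1 ≤ n) :
    FlagColoring.grundy (KGraph m n) (KColor m n) = 0 ↔ (2 ≤ m ∧ 2 ≤ n) := by
  have hKC : KColor m n = fL m n Finset.univ := by
    funext v
    rcases v with i | j <;> simp [KColor, fL]
  rw [hKC, grundy_start hm hn]
  have h1 : hN (m - 1) = 0 ↔ m = 1 := by rw [hN_eq_zero]; omega
  have h2 : hN (n - 1) = 0 ↔ n = 1 := by rw [hN_eq_zero]; omega
  constructor
  · intro h
    by_contra hcon
    have h0 : (0 : ℕ) ∈ ({hN (m - 1), hN (n - 1)} : Set ℕ) := by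
      simp only [Set.mem_insert_iff, Set.mem_singleton_iff]
      rcases Nat.lt_or_ge m 2 with hm' | hm'
      · exact Or.inl ((h1.mpr (by omega)).symm)
      · rcases Nat.lt_or_ge n 2 with hn' | hn'
        · exact Or.inr ((h2.mpr (by omega)).symm)
        · exact absurd ⟨hm', hn'⟩ hcon
    have h3 : (3 : ℕ) ∈ {j | j ∉ ({hN (m - 1), hN (n - 1)} : Set ℕ)} := by
      simp only [Set.mem_setOf_eq, Set.mem_insert_iff, Set.mem_singleton_iff, not_or]
      have := hN_le (m - 1)
      have := hN_le (n - 1)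
      omega
    have hmem := Nat.sInf_mem (⟨3, h3⟩ : Set.Nonempty {j | j ∉ ({hN (m - 1), hN (n - 1)} : Set ℕ)})
    rw [show sInf {j | j ∉ ({hN (m - 1), hN (n - 1)} : Set ℕ)}
      = mexN ({hN (m - 1), hN (n - 1)} : Set ℕ) from rfl, h] at hmem
    exact hmem h0
  · rintro ⟨hm2, hn2⟩
    refine mexN_eq_of ?_ (by omega)
    simp only [Set.mem_insert_iff, Set.mem_singleton_iff, not_or]
    constructor
    · intro he
      exact absurd (h1.mp he.symm) (by omega)
    · intro he
      exact absurd (h2.mp he.symm) (by omega)
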